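/- Let B₁ = ⟨r₀, …, r_{k−1}⟩ be a finite mixed radix base and let B₂ be obtained from B₁ by replacing two consecutive elements r_p, r_{p+1} (with p < k−1) by their product r_p·r_{p+1}. Then for every natural number v, the sum of the digits of v in base B₂ is greater than or equal to the sum of the digits of v in base B₁. -/
import Mathlib


/-- The weight of digit position `i` in mixed radix base `B`: product of the first `i` radices. -/
def weight (B : List ℕ) (i : ℕ) : ℕ := (B.take i).prod

/-- The `i`-th digit of `v` in mixed radix base `B` (the most significant digit, at
position `B.length`, is `v / B.prod` and is unbounded). -/
def digit (B : List ℕ) (v i : ℕ) : ℕ :=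
  if i < B.length then (v / weight B i) % B.getD i 1 else v / B.prod

/-- The sum of the digits of `v` in base `B`. -/
def digitSum (B : List ℕ) (v : ℕ) : ℕ :=
  ∑ i ∈ Finset.range (B.length + 1), digit B v i

/-- The sum of digits of all elements of the multiset `S` in base `B`. -/
def sumDigits (S : Multiset ℕ) (B : List ℕ) : ℕ :=
  (S.map (digitSum B)).sum

lemma digit_cons (a : ℕ) (B : List ℕ) (v i : ℕ) :
    digit (a :: B) v (i + 1) = digit B (v / a) i := by
  simp only [digit, List.length_cons, Nat.add_lt_add_iff_right, weight, List.take_succ_cons,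
    List.prod_cons, List.getD_cons_succ]
  rw [← Nat.div_div_eq_div_mul, ← Nat.div_div_eq_div_mul]

lemma digitSum_cons (a : ℕ) (B : List ℕ) (v : ℕ) :
    digitSum (a :: B) v = v % a + digitSum B (v / a) := by
  simp only [digitSum, List.length_cons]
  rw [Finset.sum_range_succ']
  have h0 : digit (a :: B) v 0 = v % a := by
    simp [digit, weight]
  rw [h0, add_comm]
  congr 1
  exact Finset.sum_congr rfl fun i _ => digit_cons a B v i

theorem stmt3 (P Q : List ℕ) (r s : ℕ) (hr : 2 ≤ r) (hs : 2 ≤ s)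
    (hP : ∀ x ∈ P, 2 ≤ x) (hQ : ∀ x ∈ Q, 2 ≤ x) (v : ℕ) :
    digitSum (P ++ r :: s :: Q) v ≤ digitSum (P ++ (r * s) :: Q) v := by
  induction P generalizing v with
  | nil =>
    simp only [List.nil_append, digitSum_cons, Nat.div_div_eq_div_mul]
    rw [Nat.mod_mul]
    have : v / r % s ≤ r * (v / r % s) :=
      Nat.le_mul_of_pos_left _ (by omega)
    omega
  | cons a P ih =>
    simp only [List.cons_append, digitSum_cons]
    exact Nat.add_le_add_left (ih (fun x hx => hP x (List.mem_cons_of_mem a hx)) (v / a)) _
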